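/- Let X₁, ..., Xₙ be Banach spaces and let Y be an infinite-dimensional closed subspace of the direct sum X = X₁ ⊕ ... ⊕ Xₙ. Let Pⱼ : X → Xⱼ denote the canonical coordinate projections. Then there exists some j ∈ {1, ..., n} such that the restriction Pⱼ|Y : Y → Xⱼ is not strictly singular. -/

import Mathlib

/-- A bounded linear operator between normed spaces is *strictly singular* if its restriction
to every infinite-dimensional closed subspace fails to be bounded below. -/
def StrictlySingular {X Y : Type*} [NormedAddCommGroup X] [NormedSpace ℝ X]
    [NormedAddCommGroup Y] [NormedSpace ℝ Y] (T : X →L[ℝ] Y) : Prop :=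
  ∀ Z : Submodule ℝ X, IsClosed (Z : Set X) → ¬ FiniteDimensional ℝ Z →
    ¬ ∃ c : ℝ, 0 < c ∧ ∀ z ∈ Z, c * ‖z‖ ≤ ‖T z‖

section Aux

variable {E F : Type*} [NormedAddCommGroup E] [NormedSpace ℝ E]
  [NormedAddCommGroup F] [NormedSpace ℝ F]

lemma not_fd_inf_ker (Z : Submodule ℝ E) (hZ : ¬ FiniteDimensional ℝ Z) (g : E →L[ℝ] ℝ) :
    ¬ FiniteDimensional ℝ (Z ⊓ LinearMap.ker (g : E →ₗ[ℝ] ℝ) : Submodule ℝ E) := by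
  intro hfd
  apply hZ
  by_cases h : ∃ z ∈ Z, g z ≠ 0
  · obtain ⟨z₀, hz₀Z, hz₀⟩ := h
    have hle : Z ≤ (Z ⊓ LinearMap.ker (g : E →ₗ[ℝ] ℝ)) ⊔ (ℝ ∙ z₀) := by
      intro z hz
      have hmem : z - (g z / g z₀) • z₀ ∈ Z ⊓ LinearMap.ker (g : E →ₗ[ℝ] ℝ) := by
        refine ⟨Z.sub_mem hz (Z.smul_mem _ hz₀Z), ?_⟩
        have : g (z - (g z / g z₀) • z₀) = 0 := by
          rw [map_sub, map_smul, smul_eq_mul]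
          field_simp
          ring
        simpa [LinearMap.mem_ker] using this
      have hz' : z = (z - (g z / g z₀) • z₀) + (g z / g z₀) • z₀ := by abel
      rw [hz']
      exact Submodule.add_mem _ (Submodule.mem_sup_left hmem)
        (Submodule.mem_sup_right (Submodule.smul_mem _ _ (Submodule.mem_span_singleton_self z₀)))
    exact Submodule.finiteDimensional_of_le hle
  · push_neg at h
    exact Submodule.finiteDimensional_of_le (le_inf le_rfl fun z hz => LinearMap.mem_ker.mpr (h z hz))

lemma exists_unit_small (T : E →L[ℝ] F) (hT : StrictlySingular T)
    (W : Submodule ℝ E) (hWc : IsClosed (W : Set E)) (hWfd : ¬ FiniteDimensional ℝ W)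
    {δ : ℝ} (hδ : 0 < δ) :
    ∃ z : E, ∃ g : E →L[ℝ] ℝ, z ∈ W ∧ ‖z‖ = 1 ∧ ‖T z‖ ≤ δ ∧ ‖g‖ ≤ 1 ∧ g z = 1 := by
  have h := hT W hWc hWfd
  push_neg at h
  obtain ⟨z, hzW, hz⟩ := h δ hδ
  have hz0 : z ≠ 0 := by
    rintro rfl; simp at hz
  have hnz : ‖z‖ ≠ 0 := norm_ne_zero_iff.mpr hz0
  set u := ‖z‖⁻¹ • z with hu_def
  have hu1 : ‖u‖ = 1 := by
    simp [hu_def, norm_smul, abs_of_nonneg (inv_nonneg.mpr (norm_nonneg z)),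
      inv_mul_cancel₀ hnz]
  have hu0 : u ≠ 0 := by
    intro h0; rw [h0] at hu1; simp at hu1
  obtain ⟨g, hg1, hgu⟩ := exists_dual_vector ℝ u (norm_ne_zero_iff.mpr hu0)
  refine ⟨u, g, W.smul_mem _ hzW, hu1, ?_, hg1.le, by simpa [hu1] using hgu⟩
  have : ‖T u‖ = ‖z‖⁻¹ * ‖T z‖ := by
    rw [hu_def, map_smul, norm_smul, Real.norm_eq_abs,
      abs_of_nonneg (inv_nonneg.mpr (norm_nonneg z))]
  rw [this]
  calc ‖z‖⁻¹ * ‖T z‖ ≤ ‖z‖⁻¹ * (δ * ‖z‖) := by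
        apply mul_le_mul_of_nonneg_left hz.le (inv_nonneg.mpr (norm_nonneg z))
    _ = δ := by field_simp

end Aux

section Seq

variable {E F : Type*} [NormedAddCommGroup E] [NormedSpace ℝ E]
  [NormedAddCommGroup F] [NormedSpace ℝ F]

lemma exists_good_seq (T : E →L[ℝ] F) (hT : StrictlySingular T)
    (Z : Submodule ℝ E) (hZc : IsClosed (Z : Set E)) (hZinf : ¬ FiniteDimensional ℝ Z)
    (δ : ℕ → ℝ) (hδ : ∀ k, 0 < δ k) :
    ∃ (z : ℕ → E) (g : ℕ → E →L[ℝ] ℝ),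
      (∀ k, z k ∈ Z) ∧ (∀ k, ‖z k‖ = 1) ∧ (∀ k, ‖T (z k)‖ ≤ δ k) ∧ (∀ k, ‖g k‖ ≤ 1) ∧
      (∀ k, g k (z k) = 1) ∧ (∀ i k, i < k → g i (z k) = 0) := by
  classical
  -- the type of "good" subspaces
  let S := {W : Submodule ℝ E // W ≤ Z ∧ IsClosed (W : Set E) ∧ ¬ FiniteDimensional ℝ W}
  have pick : ∀ (k : ℕ) (W : S), ∃ z : E, ∃ g : E →L[ℝ] ℝ,
      z ∈ W.1 ∧ ‖z‖ = 1 ∧ ‖T z‖ ≤ δ k ∧ ‖g‖ ≤ 1 ∧ g z = 1 :=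
    fun k W => exists_unit_small T hT W.1 W.2.2.1 W.2.2.2 (hδ k)
  let zOf : ℕ → S → E := fun k W => (pick k W).choose
  let gOf : ℕ → S → (E →L[ℝ] ℝ) := fun k W => (pick k W).choose_spec.choose
  have spec : ∀ (k : ℕ) (W : S), zOf k W ∈ W.1 ∧ ‖zOf k W‖ = 1 ∧ ‖T (zOf k W)‖ ≤ δ k ∧
      ‖gOf k W‖ ≤ 1 ∧ gOf k W (zOf k W) = 1 := fun k W => (pick k W).choose_spec.choose_spec
  let step : ℕ → S → S := fun k W =>
    ⟨W.1 ⊓ LinearMap.ker (gOf k W : E →ₗ[ℝ] ℝ), le_trans inf_le_left W.2.1,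
      by exact W.2.2.1.inter (ContinuousLinearMap.isClosed_ker (gOf k W)),
      not_fd_inf_ker W.1 W.2.2.2 (gOf k W)⟩
  let W : ℕ → S := fun k => Nat.rec ⟨Z, le_rfl, hZc, hZinf⟩ (fun k Wk => step k Wk) k
  have hWsucc : ∀ k, (W (k + 1)).1 = (W k).1 ⊓ LinearMap.ker (gOf k (W k) : E →ₗ[ℝ] ℝ) := fun k => rfl
  let z : ℕ → E := fun k => zOf k (W k)
  let g : ℕ → (E →L[ℝ] ℝ) := fun k => gOf k (W k)
  have hmono : ∀ i k, i ≤ k → (W k).1 ≤ (W i).1 := by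
    intro i k hik
    induction k with
    | zero => simp_all
    | succ k ih =>
      rcases Nat.lt_or_ge i (k+1) with h | h
      · exact le_trans (by rw [hWsucc]; exact inf_le_left) (ih (Nat.lt_succ_iff.mp h))
      · have : i = k + 1 := le_antisymm hik h
        subst this; exact le_rfl
  refine ⟨z, g, fun k => (W k).2.1 ((spec k (W k)).1), fun k => (spec k (W k)).2.1,
    fun k => (spec k (W k)).2.2.1, fun k => (spec k (W k)).2.2.2.1,
    fun k => (spec k (W k)).2.2.2.2, ?_⟩
  intro i k hik
  have h1 : z k ∈ (W k).1 := (spec k (W k)).1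
  have h2 : (W k).1 ≤ (W (i+1)).1 := hmono (i+1) k hik
  have h3 : z k ∈ LinearMap.ker (gOf i (W i) : E →ₗ[ℝ] ℝ) := ((hWsucc i) ▸ h2 h1).2
  exact LinearMap.mem_ker.mp h3

end Seq

section Kato

variable {E F : Type*} [NormedAddCommGroup E] [NormedSpace ℝ E]
  [NormedAddCommGroup F] [NormedSpace ℝ F]

lemma coeff_bound (z : ℕ → E) (g : ℕ → E →L[ℝ] ℝ)
    (hz1 : ∀ k, ‖z k‖ = 1) (hg1 : ∀ k, ‖g k‖ ≤ 1) (hgz : ∀ k, g k (z k) = 1)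
    (hgz0 : ∀ i k, i < k → g i (z k) = 0)
    (c : ℕ →₀ ℝ) (s : E) (hs : (c.sum fun i a => a • z i) = s) :
    ∀ k, |c k| ≤ 2 ^ k * ‖s‖ := by
  classical
  intro k
  induction k using Nat.strong_induction_on with
  | _ k ih =>
  -- g k s as a sum over support
  have h1 : g k s = ∑ i ∈ c.support, c i * g k (z i) := by
    rw [← hs, map_finsuppSum]
    simp [Finsupp.sum, smul_eq_mul]
  have h2 : ∑ i ∈ c.support, c i * g k (z i)
      = (∑ i ∈ c.support.filter (· < k), c i * g k (z i)) + c k := by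
    rw [← Finset.sum_filter_add_sum_filter_not c.support (· < k)]
    congr 1
    rw [Finset.sum_eq_single k]
    · rw [hgz k, mul_one]
    · intro b hb hbk
      have hkb : k < b := lt_of_le_of_ne (not_lt.mp (Finset.mem_filter.mp hb).2) (Ne.symm hbk)
      rw [hgz0 k b hkb, mul_zero]
    · intro hk
      have : c k = 0 := by
        by_contra hc
        exact hk (Finset.mem_filter.mpr ⟨Finsupp.mem_support_iff.mpr hc, by simp⟩)
      rw [this, zero_mul]
  have hck : c k = g k s - ∑ i ∈ c.support.filter (· < k), c i * g k (z i) := by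
    rw [h1, h2]; ring
  have hgs : |g k s| ≤ ‖s‖ := by
    calc |g k s| = ‖g k s‖ := (Real.norm_eq_abs _).symm
      _ ≤ ‖g k‖ * ‖s‖ := (g k).le_opNorm s
      _ ≤ 1 * ‖s‖ := by apply mul_le_mul_of_nonneg_right (hg1 k) (norm_nonneg s)
      _ = ‖s‖ := one_mul _
  have hterm : ∀ i ∈ c.support.filter (· < k), |c i * g k (z i)| ≤ 2 ^ i * ‖s‖ := by
    intro i hi
    have hik : i < k := (Finset.mem_filter.mp hi).2
    have h3 : |g k (z i)| ≤ 1 := by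
      calc |g k (z i)| = ‖g k (z i)‖ := (Real.norm_eq_abs _).symm
        _ ≤ ‖g k‖ * ‖z i‖ := (g k).le_opNorm _
        _ ≤ 1 * 1 := mul_le_mul (hg1 k) (le_of_eq (hz1 i)) (norm_nonneg _) zero_le_one
        _ = 1 := one_mul _
    calc |c i * g k (z i)| = |c i| * |g k (z i)| := abs_mul _ _
      _ ≤ |c i| * 1 := mul_le_mul_of_nonneg_left h3 (abs_nonneg _)
      _ = |c i| := mul_one _
      _ ≤ 2 ^ i * ‖s‖ := ih i hik
  have hsum : |∑ i ∈ c.support.filter (· < k), c i * g k (z i)|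
      ≤ ∑ i ∈ Finset.range k, 2 ^ i * ‖s‖ := by
    calc |∑ i ∈ c.support.filter (· < k), c i * g k (z i)|
        ≤ ∑ i ∈ c.support.filter (· < k), |c i * g k (z i)| := Finset.abs_sum_le_sum_abs _ _
      _ ≤ ∑ i ∈ c.support.filter (· < k), 2 ^ i * ‖s‖ := Finset.sum_le_sum hterm
      _ ≤ ∑ i ∈ Finset.range k, 2 ^ i * ‖s‖ := by
          apply Finset.sum_le_sum_of_subset_of_nonneg
          · intro i hi
            exact Finset.mem_range.mpr (Finset.mem_filter.mp hi).2
          · intro i _ _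
            positivity
  have hgeom : ∑ i ∈ Finset.range k, (2:ℝ) ^ i * ‖s‖ = (2 ^ k - 1) * ‖s‖ := by
    rw [← Finset.sum_mul]
    congr 1
    rw [geom_sum_eq (by norm_num)]
    norm_num
  calc |c k| ≤ |g k s| + |∑ i ∈ c.support.filter (· < k), c i * g k (z i)| := by
        rw [hck]; exact _root_.abs_sub (g k s) (∑ i ∈ c.support.filter (· < k), c i * g k (z i))
    _ ≤ ‖s‖ + (2 ^ k - 1) * ‖s‖ := by
        rw [← hgeom]; exact add_le_add hgs hsum
    _ = 2 ^ k * ‖s‖ := by ring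

end Kato

section Kato2

variable {E F : Type*} [NormedAddCommGroup E] [NormedSpace ℝ E]
  [NormedAddCommGroup F] [NormedSpace ℝ F]

lemma kato (T : E →L[ℝ] F) (hT : StrictlySingular T)
    (Z : Submodule ℝ E) (hZc : IsClosed (Z : Set E)) (hZinf : ¬ FiniteDimensional ℝ Z)
    {ε : ℝ} (hε : 0 < ε) :
    ∃ Z' : Submodule ℝ E, Z' ≤ Z ∧ IsClosed (Z' : Set E) ∧ ¬ FiniteDimensional ℝ Z' ∧
      ∀ u ∈ Z', ‖T u‖ ≤ ε * ‖u‖ := by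
  classical
  obtain ⟨z, g, hzZ, hz1, hzT, hg1, hgz, hgz0⟩ :=
    exists_good_seq T hT Z hZc hZinf (fun k => ε * (4:ℝ)⁻¹ ^ (k+1))
      (fun k => by positivity)
  set W : Submodule ℝ E := Submodule.span ℝ (Set.range z) with hW
  -- operator bound on the span
  have hWbd : ∀ s ∈ W, ‖T s‖ ≤ ε * ‖s‖ := by
    intro s hsW
    obtain ⟨c, hc⟩ := (Finsupp.mem_span_range_iff_exists_finsupp).mp hsW
    have hcb := coeff_bound z g hz1 hg1 hgz hgz0 c s hc
    have h1 : T s = ∑ i ∈ c.support, c i • T (z i) := by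
      rw [← hc, map_finsuppSum]
      simp [Finsupp.sum]
    obtain ⟨N, hN⟩ := c.support.exists_nat_subset_range
    have h2 : ‖T s‖ ≤ ∑ i ∈ c.support, (2:ℝ) ^ i * ‖s‖ * (ε * (4:ℝ)⁻¹ ^ (i+1)) := by
      rw [h1]
      calc ‖∑ i ∈ c.support, c i • T (z i)‖ ≤ ∑ i ∈ c.support, ‖c i • T (z i)‖ :=
            norm_sum_le _ _
        _ ≤ ∑ i ∈ c.support, (2:ℝ) ^ i * ‖s‖ * (ε * (4:ℝ)⁻¹ ^ (i+1)) := by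
            apply Finset.sum_le_sum
            intro i _
            rw [norm_smul, Real.norm_eq_abs]
            exact mul_le_mul (hcb i) (hzT i) (norm_nonneg _) (by positivity)
    have h3 : ∀ i : ℕ, (2:ℝ) ^ i * ‖s‖ * (ε * (4:ℝ)⁻¹ ^ (i+1))
        = (ε * ‖s‖ / 4) * (2:ℝ)⁻¹ ^ i := by
      intro i
      have : ((4:ℝ))⁻¹ ^ (i+1) = (4:ℝ)⁻¹ ^ i * (4:ℝ)⁻¹ := pow_succ _ _
      rw [this]
      have h4 : ((4:ℝ))⁻¹ ^ i = ((2:ℝ)⁻¹ ^ i) * ((2:ℝ)⁻¹ ^ i) := by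
        rw [← mul_pow]; norm_num
      rw [h4]
      have h5 : (2:ℝ) ^ i * ((2:ℝ)⁻¹ ^ i) = 1 := by
        rw [← mul_pow]; norm_num
      linear_combination (ε * ‖s‖ * (2:ℝ)⁻¹ ^ i / 4) * h5
    have h6 : ∑ i ∈ c.support, (2:ℝ) ^ i * ‖s‖ * (ε * (4:ℝ)⁻¹ ^ (i+1))
        ≤ (ε * ‖s‖ / 4) * 2 := by
      calc ∑ i ∈ c.support, (2:ℝ) ^ i * ‖s‖ * (ε * (4:ℝ)⁻¹ ^ (i+1))
          = ∑ i ∈ c.support, (ε * ‖s‖ / 4) * (2:ℝ)⁻¹ ^ i := by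
            exact Finset.sum_congr rfl fun i _ => h3 i
        _ ≤ ∑ i ∈ Finset.range N, (ε * ‖s‖ / 4) * (2:ℝ)⁻¹ ^ i := by
            apply Finset.sum_le_sum_of_subset_of_nonneg hN
            intro i _ _; positivity
        _ = (ε * ‖s‖ / 4) * ∑ i ∈ Finset.range N, (2:ℝ)⁻¹ ^ i := by
            rw [Finset.mul_sum]
        _ ≤ (ε * ‖s‖ / 4) * 2 := by
            apply mul_le_mul_of_nonneg_left _ (by positivity)
            have := sum_geometric_two_le N
            simpa [one_div] using this
    have : ‖T s‖ ≤ ε * ‖s‖ / 2 := by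
      calc ‖T s‖ ≤ (ε * ‖s‖ / 4) * 2 := le_trans h2 h6
        _ = ε * ‖s‖ / 2 := by ring
    nlinarith [norm_nonneg s, hε]
  -- the span is infinite dimensional
  have hWinf : ¬ FiniteDimensional ℝ W := by
    intro hfd
    have hli : LinearIndependent ℝ z := by
      rw [linearIndependent_iff]
      intro l hl
      ext k
      have : (l.sum fun i a => a • z i) = (0 : E) := by
        rw [← hl, Finsupp.linearCombination_apply]
      have := coeff_bound z g hz1 hg1 hgz hgz0 l 0 (by simpa using this) k
      simp only [norm_zero, mul_zero] at this
      simpa using abs_nonneg (l k) |>.antisymm' this |>.symm ▸ (abs_eq_zero.mp (le_antisymm this (abs_nonneg _)))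
    let z' : ℕ → W := fun k => ⟨z k, Submodule.subset_span (Set.mem_range_self k)⟩
    have hli' : LinearIndependent ℝ z' := by
      have hcomp : W.subtype ∘ z' = z := rfl
      exact LinearIndependent.of_comp W.subtype (by rw [hcomp]; exact hli)
    exact Module.Finite.not_linearIndependent_of_infinite z' hli'
  refine ⟨W.topologicalClosure, ?_, Submodule.isClosed_topologicalClosure W, ?_, ?_⟩
  · exact Submodule.topologicalClosure_minimal W
      (Submodule.span_le.mpr (Set.range_subset_iff.mpr hzZ)) hZc
  · intro hfd
    exact hWinf (Submodule.finiteDimensional_of_le (Submodule.le_topologicalClosure W))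
  · intro u hu
    have hsub : (W.topologicalClosure : Set E) ⊆ {u : E | ‖T u‖ ≤ ε * ‖u‖} := by
      rw [Submodule.topologicalClosure_coe]
      apply closure_minimal hWbd
      exact isClosed_le (T.continuous.norm) (continuous_const.mul continuous_norm)
    exact hsub hu

end Kato2

/-- The `j`-th coordinate projection on an `ℓ¹`-direct sum of finitely many Banach spaces. -/
noncomputable def l1Proj {n : ℕ} (X : Fin n → Type*) [∀ i, NormedAddCommGroup (X i)]
    [∀ i, NormedSpace ℝ (X i)] (j : Fin n) : PiLp 1 X →L[ℝ] X j :=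
  (ContinuousLinearMap.proj j).comp (PiLp.continuousLinearEquiv 1 ℝ X).toContinuousLinearMap

/-- if `Y` is an infinite-dimensional closed subspace of `X₁ ⊕ ... ⊕ Xₙ`
(with the `ℓ¹`-norm), then some coordinate projection restricted to `Y` is not strictly
singular. -/
theorem exists_proj_not_strictlySingular {n : ℕ} (X : Fin n → Type*)
    [∀ i, NormedAddCommGroup (X i)] [∀ i, NormedSpace ℝ (X i)] [∀ i, CompleteSpace (X i)]
    (Y : Submodule ℝ (PiLp 1 X)) (hYc : IsClosed (Y : Set (PiLp 1 X)))
    (hYinf : ¬ FiniteDimensional ℝ Y) :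
    ∃ j : Fin n, ¬ StrictlySingular ((l1Proj X j).comp Y.subtypeL) := by
  classical
  by_contra hcon
  push_neg at hcon
  rcases Nat.eq_zero_or_pos n with hn | hn
  · subst hn
    apply hYinf
    have hsub : Subsingleton (PiLp 1 X) := ⟨fun a b => PiLp.ext fun i => i.elim0⟩
    have : FiniteDimensional ℝ (PiLp 1 X) := Module.Finite.of_basis (Module.Basis.empty _ (ι := Fin 0))
    infer_instance
  set ε : ℝ := 1 / (2 * n) with hε
  have hεpos : 0 < ε := by positivity
  have key : ∀ k : ℕ, k ≤ n → ∃ Z : Submodule ℝ Y, IsClosed (Z : Set Y) ∧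
      ¬ FiniteDimensional ℝ Z ∧
      ∀ i : Fin n, (i : ℕ) < k → ∀ z ∈ Z, ‖((l1Proj X i).comp Y.subtypeL) z‖ ≤ ε * ‖z‖ := by
    intro k
    induction k with
    | zero =>
      intro _
      refine ⟨⊤, by rw [Submodule.top_coe]; exact isClosed_univ, ?_, by omega⟩
      intro hfd
      exact hYinf (Submodule.topEquiv.finiteDimensional)
    | succ k ih =>
      intro hk
      obtain ⟨Z, hZc, hZinf, hZ⟩ := ih (Nat.le_of_succ_le hk)
      have hkn : k < n := hk
      obtain ⟨Z', hle, hc, hinf, hbd⟩ :=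
        kato _ (hcon ⟨k, hkn⟩) Z hZc hZinf hεpos
      refine ⟨Z', hc, hinf, ?_⟩
      intro i hi z hz
      rcases Nat.lt_or_ge (i : ℕ) k with h | h
      · exact hZ i h z (hle hz)
      · have : (i : ℕ) = k := by omega
        have hik : i = (⟨k, hkn⟩ : Fin n) := Fin.ext this
        rw [hik]
        exact hbd z hz
  obtain ⟨Z, hZc, hZinf, hZ⟩ := key n le_rfl
  -- Z contains a nonzero vector
  have : ∃ z ∈ Z, z ≠ 0 := by
    by_contra hall
    push_neg at hall
    apply hZinf
    have : Z = ⊥ := (Submodule.eq_bot_iff Z).mpr hall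
    rw [this]
    infer_instance
  obtain ⟨z, hzZ, hz0⟩ := this
  have hcoord : ∀ j : Fin n, ((l1Proj X j).comp Y.subtypeL) z = (z : PiLp 1 X) j :=
    fun j => rfl
  have hnorm : ‖z‖ = ∑ j : Fin n, ‖((l1Proj X j).comp Y.subtypeL) z‖ := by
    have h1 : ‖z‖ = ‖(z : PiLp 1 X)‖ := rfl
    rw [h1, PiLp.norm_eq_sum (p := 1)]
    · simp only [ENNReal.toReal_one, Real.rpow_one, div_one]
      exact Finset.sum_congr rfl fun j _ => by rw [hcoord j]
    · norm_num
  have hbd : ‖z‖ ≤ (n : ℝ) * (ε * ‖z‖) := by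
    calc ‖z‖ = ∑ j : Fin n, ‖((l1Proj X j).comp Y.subtypeL) z‖ := hnorm
      _ ≤ ∑ _j : Fin n, ε * ‖z‖ :=
          Finset.sum_le_sum (fun j _ => hZ j j.isLt z hzZ)
      _ = (n : ℝ) * (ε * ‖z‖) := by
          rw [Finset.sum_const, Finset.card_univ, Fintype.card_fin, nsmul_eq_mul]
  have hzpos : 0 < ‖z‖ := by
    rw [norm_pos_iff]
    exact hz0
  have hne : (n : ℝ) * ε = 1 / 2 := by
    rw [hε]
    field_simp
  rw [← mul_assoc, hne] at hbd
  linarith
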